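/- Suppose there exists a Steiner system S(w,w',n) whose block set can be partitioned into p = C(n-t,w-t)/C(w'-t,w-t) pairwise disjoint block sets each forming an S(t,w',n) (a t-resolvable S(w,w',n)), and suppose there exists a large set LGS(t,w,w',g), i.e., a partition of all weight-w words on w' coordinates over alphabet size g+1 into g^{w-t}·C(w'-t,w-t) pairwise disjoint generalized Steiner systems GS(t,w,w',g). Then there exists a large set LGS(t,w,n,g): a partition of all C(n,w)·g^w weight-w words of length n over Z_{g+1} into pairwise disjoint generalized Steiner systems GS(t,w,n,g). -/
import Mathlib

open Finset

section Emb
variable {g w' n : ℕ}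

/-- Embed a word on `Fin w'` into `Fin n` along a block `b` of size `w'`. -/
noncomputable def emb (b : Finset (Fin n)) (hb : b.card = w') (c : Fin w' → ZMod (g + 1)) :
    Fin n → ZMod (g + 1) :=
  fun i => if h : i ∈ b then c (Finset.equivFinOfCardEq hb ⟨i, h⟩) else 0

/-- The coordinate injection `Fin w' → Fin n` associated to a block. -/
noncomputable def ib (b : Finset (Fin n)) (hb : b.card = w') : Fin w' → Fin n :=
  fun j => ((Finset.equivFinOfCardEq hb).symm j : Fin n)

variable {b : Finset (Fin n)} {hb : b.card = w'}

lemma ib_mem (j : Fin w') : ib b hb j ∈ b := ((Finset.equivFinOfCardEq hb).symm j).2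

lemma ib_inj : Function.Injective (ib b hb) := by
  intro j k h
  have := Subtype.ext (p := (· ∈ b)) h
  simpa using (Finset.equivFinOfCardEq hb).symm.injective this

lemma emb_apply_mem (c : Fin w' → ZMod (g + 1)) {i : Fin n} (h : i ∈ b) :
    emb b hb c i = c (Finset.equivFinOfCardEq hb ⟨i, h⟩) := dif_pos h

lemma emb_apply_notMem (c : Fin w' → ZMod (g + 1)) {i : Fin n} (h : i ∉ b) :
    emb b hb c i = 0 := dif_neg h

lemma emb_ib (c : Fin w' → ZMod (g + 1)) (j : Fin w') : emb b hb c (ib b hb j) = c j := by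
  rw [emb_apply_mem (h := ib_mem j)]
  congr 1
  have : (⟨ib b hb j, ib_mem j⟩ : {x // x ∈ b}) = (Finset.equivFinOfCardEq hb).symm j := rfl
  rw [this, Equiv.apply_symm_apply]

lemma ib_surj {i : Fin n} (h : i ∈ b) : ∃ j, ib b hb j = i :=
  ⟨Finset.equivFinOfCardEq hb ⟨i, h⟩, by simp [ib]⟩

lemma mem_of_emb_ne_zero {c : Fin w' → ZMod (g + 1)} {i : Fin n} (h : emb b hb c i ≠ 0) :
    i ∈ b := by
  by_contra hi; exact h (emb_apply_notMem c hi)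

lemma emb_inj : Function.Injective (emb (g := g) b hb) := by
  intro c d h
  funext j
  have := congrFun h (ib b hb j)
  rwa [emb_ib, emb_ib] at this

lemma filter_emb_ne (c d : Fin w' → ZMod (g + 1)) :
    ({i | emb b hb c i ≠ emb b hb d i} : Finset (Fin n)) =
      ({j | c j ≠ d j} : Finset (Fin w')).image (ib b hb) := by
  ext i
  simp only [mem_filter, mem_univ, true_and, mem_image]
  constructor
  · intro hi
    have hib : i ∈ b := by
      by_contra hib
      rw [emb_apply_notMem c hib, emb_apply_notMem d hib] at hi
      exact hi rfl
    obtain ⟨j, hj⟩ := ib_surj (hb := hb) hib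
    refine ⟨j, ?_, hj⟩
    intro hcd
    apply hi
    subst hj
    rw [emb_ib, emb_ib, hcd]
  · rintro ⟨j, hj, rfl⟩
    rw [emb_ib, emb_ib]
    exact hj

lemma hammingDist_emb (c d : Fin w' → ZMod (g + 1)) :
    hammingDist (emb b hb c) (emb b hb d) = hammingDist c d := by
  rw [hammingDist, hammingDist, filter_emb_ne, Finset.card_image_of_injective _ ib_inj]

lemma emb_zero : emb b hb (0 : Fin w' → ZMod (g + 1)) = 0 := by
  funext i
  by_cases h : i ∈ b
  · rw [emb_apply_mem (h := h)]; rfl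
  · exact emb_apply_notMem _ h

lemma hammingNorm_emb (c : Fin w' → ZMod (g + 1)) :
    hammingNorm (emb b hb c) = hammingNorm c := by
  rw [← hammingDist_zero_right, ← hammingDist_zero_right, ← emb_zero (hb := hb),
    hammingDist_emb]

lemma exists_emb {x : Fin n → ZMod (g + 1)} (hx : ∀ i, i ∉ b → x i = 0) :
    ∃ c, emb b hb c = x := by
  refine ⟨fun j => x (ib b hb j), funext fun i => ?_⟩
  by_cases h : i ∈ b
  · rw [emb_apply_mem (h := h)]
    congr 1
    show (((Finset.equivFinOfCardEq hb).symm (Finset.equivFinOfCardEq hb ⟨i, h⟩) : b) : Fin n) = i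
    rw [Equiv.symm_apply_apply]
  · rw [emb_apply_notMem _ h, hx i h]

end Emb


/-- `B` is a Steiner system `S(t,k,n)` on `Fin n`: all blocks have size `k`
and every `t`-subset lies in exactly one block. -/
def isSteiner (t k n : ℕ) (B : Finset (Finset (Fin n))) : Prop :=
  (∀ b ∈ B, b.card = k) ∧
  ∀ T : Finset (Fin n), T.card = t → ∃! b, b ∈ B ∧ T ⊆ b

/-- `C` is a generalized Steiner system `GS(t,w,n,g)`, in codeword form:
a set of weight-`w` words of length `n` over `Z_{g+1}` with minimum Hamming
distance `2(w-t)+1` such that every assignment of nonzero values to `t`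
distinct coordinates is extended by exactly one codeword. -/
def isGS (g t w n : ℕ) (C : Finset (Fin n → ZMod (g + 1))) : Prop :=
  (∀ x ∈ C, hammingNorm x = w) ∧
  (∀ x ∈ C, ∀ y ∈ C, x ≠ y → 2 * (w - t) + 1 ≤ hammingDist x y) ∧
  ∀ S : Finset (Fin n), S.card = t → ∀ f : Fin n → ZMod (g + 1),
    (∀ i ∈ S, f i ≠ 0) → ∃! x, x ∈ C ∧ ∀ i ∈ S, x i = f i

/-- If there exists a `t`-resolvable `S(w,w',n)` (an `S(w,w',n)` whose block
set is partitioned into `p = C(n-t,w-t)/C(w'-t,w-t)` pairwise disjoint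
`S(t,w',n)`s) and a large set `LGS(t,w,w',g)` (a partition of all weight-`w`
words of length `w'` over `Z_{g+1}` into `g^(w-t)·C(w'-t,w-t)` pairwise
disjoint `GS(t,w,w',g)`s), then there exists a large set `LGS(t,w,n,g)`:
a partition of all weight-`w` words of length `n` over `Z_{g+1}` into
pairwise disjoint `GS(t,w,n,g)`s. -/
theorem stmt11 (g t w w' n p : ℕ)
    (hp : p * Nat.choose (w' - t) (w - t) = Nat.choose (n - t) (w - t))
    (Q : Fin p → Finset (Finset (Fin n)))
    (hQ : ∀ i, isSteiner t w' n (Q i))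
    (hQdisj : ∀ i j, i ≠ j → Disjoint (Q i) (Q j))
    (hQS : isSteiner w w' n (Finset.univ.biUnion Q))
    (L : Finset (Finset (Fin w' → ZMod (g + 1))))
    (hL : ∀ C ∈ L, isGS g t w w' C)
    (hLdisj : ∀ C ∈ L, ∀ D ∈ L, C ≠ D → Disjoint C D)
    (hLcover : ∀ x : Fin w' → ZMod (g + 1), hammingNorm x = w → ∃ C ∈ L, x ∈ C)
    (hLcard : L.card = g ^ (w - t) * Nat.choose (w' - t) (w - t)) :
    ∃ P : Finset (Finset (Fin n → ZMod (g + 1))),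
      (∀ C ∈ P, isGS g t w n C) ∧
      (∀ C ∈ P, ∀ D ∈ P, C ≠ D → Disjoint C D) ∧
      ∀ x : Fin n → ZMod (g + 1), hammingNorm x = w → ∃ C ∈ P, x ∈ C := by
  classical
  have hbc : ∀ (i : Fin p) {b}, b ∈ Q i → b.card = w' := fun i {b} hb => (hQ i).1 b hb
  -- the GS systems of the large set, indexed by resolution class and member of `L`
  set PC : Fin p → Finset (Fin w' → ZMod (g + 1)) → Finset (Fin n → ZMod (g + 1)) :=
    fun i C => (Q i).attach.biUnion fun b => C.image (emb b.1 (hbc i b.2)) with hPCdef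
  have memPC : ∀ {i : Fin p} {C : Finset (Fin w' → ZMod (g + 1))} {x},
      x ∈ PC i C ↔ ∃ b, ∃ hb : b ∈ Q i, ∃ c ∈ C, emb b (hbc i hb) c = x := by
    intro i C x
    simp only [hPCdef, Finset.mem_biUnion, Finset.mem_attach, Finset.mem_image, true_and,
      Subtype.exists]
  -- distinct blocks in one resolution class meet in fewer than `t` points
  have blockInt : ∀ (i : Fin p) {b b'}, b ∈ Q i → b' ∈ Q i → b ≠ b' → (b ∩ b').card < t := by
    intro i b b' hb hb' hne
    by_contra hle
    push_neg at hle
    obtain ⟨T, hTsub, hT⟩ := Finset.exists_subset_card_eq hle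
    obtain ⟨u, _, hu⟩ := (hQ i).2 T hT
    have h1 := hu b ⟨hb, hTsub.trans Finset.inter_subset_left⟩
    have h2 := hu b' ⟨hb', hTsub.trans Finset.inter_subset_right⟩
    exact hne (h1.trans h2.symm)
  -- each `PC i C` is a `GS(t,w,n,g)`
  have hGS : ∀ (i : Fin p), ∀ C ∈ L, isGS g t w n (PC i C) := by
    intro i C hCL
    obtain ⟨hC1, hC2, hC3⟩ := hL C hCL
    refine ⟨?_, ?_, ?_⟩
    · intro x hx
      obtain ⟨b, hb, c, hc, rfl⟩ := memPC.1 hx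
      rw [hammingNorm_emb]
      exact hC1 c hc
    · intro x hx y hy hxy
      obtain ⟨b, hb, c, hc, rfl⟩ := memPC.1 hx
      obtain ⟨b', hb', d, hd, rfl⟩ := memPC.1 hy
      by_cases hbb : b = b'
      · subst hbb
        have hcd : c ≠ d := by
          intro h; subst h; exact hxy rfl
        calc 2 * (w - t) + 1 ≤ hammingDist c d := hC2 c hc d hd hcd
          _ = _ := (hammingDist_emb (hb := hbc i hb) c d).symm
      · have hint := blockInt i hb hb' hbb
        by_cases hwt : t < w
        · set x := emb b (hbc i hb) c with hxdef
          set y := emb b' (hbc i hb') d with hydef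
          set Sx : Finset (Fin n) := Finset.univ.filter (fun i0 => x i0 ≠ 0) with hSxdef
          set Sy : Finset (Fin n) := Finset.univ.filter (fun i0 => y i0 ≠ 0) with hSydef
          have hSxb : Sx ⊆ b := by
            intro i0 h0
            rw [hSxdef, Finset.mem_filter] at h0
            exact mem_of_emb_ne_zero h0.2
          have hSyb : Sy ⊆ b' := by
            intro i0 h0
            rw [hSydef, Finset.mem_filter] at h0
            exact mem_of_emb_ne_zero h0.2
          have hSxw : Sx.card = w := by
            have : Sx.card = hammingNorm x := rfl
            rw [this, hxdef, hammingNorm_emb]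
            exact hC1 c hc
          have hSyw : Sy.card = w := by
            have : Sy.card = hammingNorm y := rfl
            rw [this, hydef, hammingNorm_emb]
            exact hC1 d hd
          have hsub : (Sx \ b') ∪ (Sy \ b) ⊆ Finset.univ.filter (fun i0 => x i0 ≠ y i0) := by
            intro i0 h0
            rw [Finset.mem_filter]
            refine ⟨Finset.mem_univ _, ?_⟩
            rcases Finset.mem_union.1 h0 with h0 | h0
            · rw [Finset.mem_sdiff, hSxdef, Finset.mem_filter] at h0
              rw [hydef, emb_apply_notMem d h0.2]
              exact h0.1.2
            · rw [Finset.mem_sdiff, hSydef, Finset.mem_filter] at h0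
              intro hc0
              rw [hxdef, emb_apply_notMem c h0.2] at hc0
              exact h0.1.2 hc0.symm
          have hdisj : Disjoint (Sx \ b') (Sy \ b) := by
            rw [Finset.disjoint_left]
            intro i0 h1 h2
            rw [Finset.mem_sdiff] at h1 h2
            exact h2.2 (hSxb h1.1)
          have hcard1 : (Sx \ b').card + (Sx ∩ b').card = Sx.card :=
            Finset.card_sdiff_add_card_inter _ _
          have hcard2 : (Sy \ b).card + (Sy ∩ b).card = Sy.card :=
            Finset.card_sdiff_add_card_inter _ _
          have hle1 : (Sx ∩ b').card ≤ (b ∩ b').card :=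
            Finset.card_le_card (Finset.inter_subset_inter_right hSxb)
          have hle2 : (Sy ∩ b).card ≤ (b ∩ b').card := by
            refine Finset.card_le_card ?_
            intro i0 h0
            rw [Finset.mem_inter] at h0 ⊢
            exact ⟨h0.2, hSyb h0.1⟩
          have hdist : (Sx \ b').card + (Sy \ b).card ≤ hammingDist x y := by
            rw [← Finset.card_union_of_disjoint hdisj]
            exact Finset.card_le_card hsub
          omega
        · have hwt0 : w - t = 0 := Nat.sub_eq_zero_of_le (le_of_not_gt hwt)
          rw [hwt0]
          simpa [Nat.one_le_iff_ne_zero, hammingDist_eq_zero] using hxy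
    · intro S hS f hf
      obtain ⟨b, ⟨hbQ, hSb⟩, hbu⟩ := (hQ i).2 S hS
      have hb := hbc i hbQ
      set S' : Finset (Fin w') := Finset.univ.filter (fun j => ib b hb j ∈ S) with hS'def
      have hS' : S'.card = t := by
        have himg : S'.image (ib b hb) = S := by
          ext i0
          simp only [Finset.mem_image, hS'def, Finset.mem_filter, Finset.mem_univ, true_and]
          constructor
          · rintro ⟨j, hj, rfl⟩; exact hj
          · intro hi0
            obtain ⟨j, hj⟩ := ib_surj (hb := hb) (hSb hi0)
            exact ⟨j, by rw [hj]; exact hi0, hj⟩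
        rw [← hS, ← himg, Finset.card_image_of_injective _ ib_inj]
      have hf' : ∀ j ∈ S', f (ib b hb j) ≠ 0 := by
        intro j hj
        rw [hS'def, Finset.mem_filter] at hj
        exact hf _ hj.2
      obtain ⟨z, ⟨hzC, hz⟩, hzu⟩ := hC3 S' hS' (fun j => f (ib b hb j)) hf'
      refine ⟨emb b hb z, ⟨memPC.2 ⟨b, hbQ, z, hzC, rfl⟩, ?_⟩, ?_⟩
      · intro i0 hi0
        obtain ⟨j, rfl⟩ := ib_surj (hb := hb) (hSb hi0)
        rw [emb_ib]
        exact hz j (by rw [hS'def, Finset.mem_filter]; exact ⟨Finset.mem_univ _, hi0⟩)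
      · rintro y ⟨hy, hyf⟩
        obtain ⟨b2, hb2Q, d, hdC, rfl⟩ := memPC.1 hy
        have hSb2 : S ⊆ b2 := by
          intro i0 hi0
          apply mem_of_emb_ne_zero (i := i0)
          rw [hyf i0 hi0]
          exact hf i0 hi0
        have hbe : b2 = b := hbu b2 ⟨hb2Q, hSb2⟩
        subst hbe
        have hd : ∀ j ∈ S', d j = f (ib b2 hb j) := by
          intro j hj
          have hjS : ib b2 hb j ∈ S := by
            rw [hS'def, Finset.mem_filter] at hj
            exact hj.2
          have := hyf (ib b2 hb j) hjS
          rwa [show emb b2 (hbc i hb2Q) d (ib b2 hb j) = d j from emb_ib d j] at this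
        have : d = z := hzu d ⟨hdC, hd⟩
        rw [this]
  -- the large set
  refine ⟨(Finset.univ ×ˢ L).image fun z => PC z.1 z.2, ?_, ?_, ?_⟩
  · intro C hC
    rw [Finset.mem_image] at hC
    obtain ⟨⟨i, D⟩, hmem, rfl⟩ := hC
    exact hGS i D (Finset.mem_product.1 hmem).2
  · intro C1 hC1 C2 hC2 hne
    rw [Finset.mem_image] at hC1 hC2
    obtain ⟨⟨i, C⟩, hmem1, rfl⟩ := hC1
    obtain ⟨⟨j, D⟩, hmem2, rfl⟩ := hC2
    have hCL := (Finset.mem_product.1 hmem1).2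
    have hDL := (Finset.mem_product.1 hmem2).2
    rw [Finset.disjoint_left]
    intro x hx1 hx2
    obtain ⟨b, hbQ, c, hcC, rfl⟩ := memPC.1 hx1
    obtain ⟨b2, hb2Q, d, hdD, hx⟩ := memPC.1 hx2
    set Sx : Finset (Fin n) := Finset.univ.filter (fun i0 => emb b (hbc i hbQ) c i0 ≠ 0)
      with hSxdef
    have hSxw : Sx.card = w := by
      have : Sx.card = hammingNorm (emb b (hbc i hbQ) c) := rfl
      rw [this, hammingNorm_emb]
      exact (hL C hCL).1 c hcC
    have hSxb : Sx ⊆ b := by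
      intro i0 h0
      rw [hSxdef, Finset.mem_filter] at h0
      exact mem_of_emb_ne_zero h0.2
    have hSxb2 : Sx ⊆ b2 := by
      intro i0 h0
      rw [hSxdef, Finset.mem_filter] at h0
      refine mem_of_emb_ne_zero (hb := hbc j hb2Q) (c := d) ?_
      rw [hx]
      exact h0.2
    obtain ⟨u, _, hu⟩ := hQS.2 Sx hSxw
    have h1 := hu b ⟨Finset.mem_biUnion.2 ⟨i, Finset.mem_univ _, hbQ⟩, hSxb⟩
    have h2 := hu b2 ⟨Finset.mem_biUnion.2 ⟨j, Finset.mem_univ _, hb2Q⟩, hSxb2⟩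
    have hbe : b2 = b := h2.trans h1.symm
    subst hbe
    have hij : i = j := by
      by_contra hij
      exact (Finset.disjoint_left.1 (hQdisj i j hij)) hbQ hb2Q
    subst hij
    have hcd : d = c := emb_inj hx
    subst hcd
    have hCD : C = D := by
      by_contra hCD
      exact (Finset.disjoint_left.1 (hLdisj C hCL D hDL hCD)) hcC hdD
    subst hCD
    exact hne rfl
  · intro x hx
    set Sx : Finset (Fin n) := Finset.univ.filter (fun i0 => x i0 ≠ 0) with hSxdef
    have hSxw : Sx.card = w := hx
    obtain ⟨b, ⟨hbB, hSb⟩, -⟩ := hQS.2 Sx hSxw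
    obtain ⟨i, -, hbQ⟩ := Finset.mem_biUnion.1 hbB
    have hb := hbc i hbQ
    have hx0 : ∀ i0, i0 ∉ b → x i0 = 0 := by
      intro i0 hi0
      by_contra h0
      exact hi0 (hSb (by rw [hSxdef, Finset.mem_filter]; exact ⟨Finset.mem_univ _, h0⟩))
    obtain ⟨c, hc⟩ := exists_emb (hb := hb) hx0
    have hcn : hammingNorm c = w := by
      rw [← hammingNorm_emb (hb := hb) c, hc]
      exact hx
    obtain ⟨C, hCL, hcC⟩ := hLcover c hcn
    refine ⟨PC i C, ?_, memPC.2 ⟨b, hbQ, c, hcC, hc⟩⟩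
    exact Finset.mem_image.2 ⟨(i, C), Finset.mem_product.2 ⟨Finset.mem_univ _, hCL⟩, rfl⟩
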